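/- If L is a language over Σ with a semilinear Parikh map, then the positive closure L^+ = { w_1 w_2 ... w_k | k ≥ 1, each w_i in L } has a semilinear Parikh map. -/

import Mathlib

open Pointwise

def IsLinear {n : ℕ} (S : Set (Fin n → ℕ)) : Prop :=
  ∃ (t : ℕ) (v₀ : Fin n → ℕ) (v : Fin t → Fin n → ℕ),
    S = {x | ∃ i : Fin t → ℕ, x = v₀ + ∑ j, i j • v j}

def IsSemilinear {n : ℕ} (S : Set (Fin n → ℕ)) : Prop :=
  ∃ (k : ℕ) (L : Fin k → Set (Fin n → ℕ)),
    (∀ i, IsLinear (L i)) ∧ S = ⋃ i, L i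


def parikh {n : ℕ} (w : List (Fin n)) : Fin n → ℕ := fun a => w.count a

def wpow {α : Type} (β : List α) (m : ℕ) : List α := (List.replicate m β).flatten

/-- positive sum closure of a set of vectors -/
def plusSet {n : ℕ} (A : Set (Fin n → ℕ)) : Set (Fin n → ℕ) :=
  {x | ∃ m : ℕ, ∃ f : Fin (m + 1) → (Fin n → ℕ), (∀ j, f j ∈ A) ∧ x = ∑ j, f j}

namespace PPS

variable {n : ℕ} {A B : Set (Fin n → ℕ)}

lemma mem_plus_self {a : Fin n → ℕ} (h : a ∈ A) : a ∈ plusSet A :=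
  ⟨0, fun _ => a, fun _ => h, by simp⟩

lemma plus_mono (h : A ⊆ B) : plusSet A ⊆ plusSet B := by
  rintro x ⟨m, f, hf, rfl⟩
  exact ⟨m, f, fun j => h (hf j), rfl⟩

lemma cons_mem_plus {a y : Fin n → ℕ} (ha : a ∈ A) (hy : y ∈ plusSet A) :
    a + y ∈ plusSet A := by
  obtain ⟨m, f, hf, rfl⟩ := hy
  refine ⟨m + 1, Fin.cons a f, ?_, ?_⟩
  · intro j
    refine Fin.cases ?_ ?_ j <;> simp [ha, hf]
  · simp [Fin.sum_univ_succ]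

lemma add_mem_plus {x y : Fin n → ℕ} (hx : x ∈ plusSet A) (hy : y ∈ plusSet A) :
    x + y ∈ plusSet A := by
  obtain ⟨m, f, hf, rfl⟩ := hx
  induction m with
  | zero => simpa using cons_mem_plus (hf 0) hy
  | succ m ih =>
    rw [Fin.sum_univ_succ, add_assoc]
    exact cons_mem_plus (hf 0) (ih (fun j => f j.succ) (fun j => hf j.succ))

lemma plus_union :
    plusSet (A ∪ B) = plusSet A ∪ plusSet B ∪ (plusSet A + plusSet B) := by
  ext x
  constructor
  · rintro ⟨m, f, hf, rfl⟩
    induction m with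
    | zero =>
      rw [show (∑ j : Fin (0+1), f j) = f 0 by simp [Fin.sum_univ_succ]]
      rcases hf 0 with h | h
      · exact Or.inl (Or.inl (mem_plus_self h))
      · exact Or.inl (Or.inr (mem_plus_self h))
    | succ m ih =>
      rw [Fin.sum_univ_succ]
      have htail := ih (fun j => f j.succ) (fun j => hf j.succ)
      rcases hf 0 with h0 | h0
      · rcases htail with (ht | ht) | ht
        · exact Or.inl (Or.inl (cons_mem_plus h0 ht))
        · exact Or.inr (Set.add_mem_add (mem_plus_self h0) ht)
        · obtain ⟨p, hp, q, hq, heq⟩ := ht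
          rw [← heq, show f 0 + (p + q) = (f 0 + p) + q from by ring]
          exact Or.inr (Set.add_mem_add (cons_mem_plus h0 hp) hq)
      · rcases htail with (ht | ht) | ht
        · rw [add_comm (f 0)]
          exact Or.inr (Set.add_mem_add ht (mem_plus_self h0))
        · exact Or.inl (Or.inr (cons_mem_plus h0 ht))
        · obtain ⟨p, hp, q, hq, heq⟩ := ht
          rw [← heq, show f 0 + (p + q) = p + (f 0 + q) from by ring]
          exact Or.inr (Set.add_mem_add hp (cons_mem_plus h0 hq))
  · rintro ((h | h) | h)
    · exact plus_mono Set.subset_union_left h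
    · exact plus_mono Set.subset_union_right h
    · obtain ⟨p, hp, q, hq, rfl⟩ := h
      exact add_mem_plus (plus_mono Set.subset_union_left hp)
        (plus_mono Set.subset_union_right hq)

lemma plus_linear (h : IsLinear A) : IsLinear (plusSet A) := by
  obtain ⟨t, v₀, v, rfl⟩ := h
  refine ⟨t + 1, v₀, Fin.cons v₀ v, ?_⟩
  ext x
  simp only [Set.mem_setOf_eq]
  constructor
  · rintro ⟨m, f, hf, rfl⟩
    induction m with
    | zero =>
      obtain ⟨c, hc⟩ := hf 0
      refine ⟨Fin.cons 0 c, ?_⟩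
      rw [show (∑ j : Fin (0+1), f j) = f 0 by simp [Fin.sum_univ_succ], hc]
      rw [Fin.sum_univ_succ]
      simp only [Fin.cons_zero, Fin.cons_succ, zero_smul, zero_add]
    | succ m ih =>
      obtain ⟨i, hi⟩ := ih (fun j => f j.succ) (fun j => hf j.succ)
      obtain ⟨c, hc⟩ := hf 0
      refine ⟨Fin.cons (i 0 + 1) (fun j => i j.succ + c j), ?_⟩
      rw [show (∑ j : Fin (m+1+1), f j) = f 0 + ∑ j : Fin (m+1), f j.succ from
        Fin.sum_univ_succ f, hc, hi]
      simp only [Fin.sum_univ_succ, Fin.cons_zero, Fin.cons_succ]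
      funext a
      simp only [Pi.add_apply, Finset.sum_apply, Pi.smul_apply, smul_eq_mul, add_mul,
        one_mul, Finset.sum_add_distrib]
      ring
  · rintro ⟨i, rfl⟩
    refine ⟨i 0, Fin.cons (v₀ + ∑ j, i j.succ • v j) (fun _ => v₀), ?_, ?_⟩
    · intro j
      refine Fin.cases ?_ ?_ j
      · exact ⟨fun j => i j.succ, rfl⟩
      · intro j'
        exact ⟨0, by simp⟩
    · rw [Fin.sum_univ_succ]
      rw [Fin.sum_univ_succ]
      simp only [Fin.cons_zero, Fin.cons_succ, Finset.sum_const, Finset.card_univ,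
        Fintype.card_fin]
      funext a
      simp only [Pi.add_apply, Finset.sum_apply, Pi.smul_apply, smul_eq_mul]
      ring

lemma linear_add (hA : IsLinear A) (hB : IsLinear B) : IsLinear (A + B) := by
  obtain ⟨t₁, v₀, v, rfl⟩ := hA
  obtain ⟨t₂, w₀, w, rfl⟩ := hB
  refine ⟨t₁ + t₂, v₀ + w₀, Fin.append v w, ?_⟩
  ext x
  constructor
  · rintro ⟨a, ⟨i, rfl⟩, b, ⟨i', rfl⟩, rfl⟩
    refine ⟨Fin.append i i', ?_⟩
    rw [Fin.sum_univ_add]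
    simp only [Fin.append_left, Fin.append_right]
    ring
  · rintro ⟨c, rfl⟩
    refine ⟨v₀ + ∑ j, c (Fin.castAdd t₂ j) • v j, ⟨fun j => c (Fin.castAdd t₂ j), rfl⟩,
      w₀ + ∑ j, c (Fin.natAdd t₁ j) • w j, ⟨fun j => c (Fin.natAdd t₁ j), rfl⟩, ?_⟩
    rw [Fin.sum_univ_add]
    simp only [Fin.append_left, Fin.append_right]
    ring

lemma semilinear_of_fintype {ι : Type} [Fintype ι] (F : ι → Set (Fin n → ℕ))
    (h : ∀ i, IsLinear (F i)) : IsSemilinear (⋃ i, F i) := by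
  refine ⟨Fintype.card ι, fun j => F ((Fintype.equivFin ι).symm j), fun j => h _, ?_⟩
  exact ((Fintype.equivFin ι).symm.surjective.iUnion_comp F).symm

lemma semilinear_union (hA : IsSemilinear A) (hB : IsSemilinear B) :
    IsSemilinear (A ∪ B) := by
  obtain ⟨k₁, L₁, hL₁, rfl⟩ := hA
  obtain ⟨k₂, L₂, hL₂, rfl⟩ := hB
  have := semilinear_of_fintype (Sum.elim L₁ L₂) (by rintro (i | i) <;> simp [hL₁, hL₂])
  rwa [Set.iUnion_sum] at this
  -- hope Set.iUnion_sum states ⋃ x : α ⊕ β, f x = (⋃ i, f (inl i)) ∪ ⋃ j, f (inr j)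

lemma semilinear_add (hA : IsSemilinear A) (hB : IsSemilinear B) :
    IsSemilinear (A + B) := by
  obtain ⟨k₁, L₁, hL₁, rfl⟩ := hA
  obtain ⟨k₂, L₂, hL₂, rfl⟩ := hB
  have := semilinear_of_fintype (fun p : Fin k₁ × Fin k₂ => L₁ p.1 + L₂ p.2)
    (fun p => linear_add (hL₁ p.1) (hL₂ p.2))
  have heq : (⋃ i, L₁ i) + (⋃ i, L₂ i) = ⋃ p : Fin k₁ × Fin k₂, (L₁ p.1 + L₂ p.2) := by
    rw [Set.iUnion_add]
    simp_rw [Set.add_iUnion]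
    rw [Set.iUnion_prod']
  rwa [heq]

lemma semilinear_of_linear (h : IsLinear A) : IsSemilinear A :=
  ⟨1, fun _ => A, fun _ => h, (Set.iUnion_const A).symm⟩

lemma fin_succ_union {k : ℕ} (F : Fin (k + 1) → Set (Fin n → ℕ)) :
    (⋃ i, F i) = F 0 ∪ ⋃ i : Fin k, F i.succ := by
  ext x
  simp only [Set.mem_iUnion, Set.mem_union]
  constructor
  · rintro ⟨i, h⟩
    refine Fin.cases (fun h => Or.inl h) (fun j h => Or.inr ⟨j, h⟩) i h
  · rintro (h | ⟨j, h⟩)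
    exacts [⟨0, h⟩, ⟨j.succ, h⟩]

lemma plus_semilinear (h : IsSemilinear A) : IsSemilinear (plusSet A) := by
  obtain ⟨k, F, hF, rfl⟩ := h
  induction k with
  | zero =>
    refine ⟨0, Fin.elim0, fun i => i.elim0, ?_⟩
    ext x
    simp only [Set.mem_iUnion]
    constructor
    · rintro ⟨m, f, hf, rfl⟩
      obtain ⟨i, -⟩ := Set.mem_iUnion.mp (hf 0)
      exact i.elim0
    · rintro ⟨i, _⟩
      exact i.elim0
  | succ k ih =>
    rw [fin_succ_union, plus_union]
    have h0 : IsSemilinear (plusSet (F 0)) :=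
      semilinear_of_linear (plus_linear (hF 0))
    have ht : IsSemilinear (plusSet (⋃ i : Fin k, F i.succ)) :=
      ih (fun i => F i.succ) (fun i => hF i.succ)
    exact semilinear_union (semilinear_union h0 ht) (semilinear_add h0 ht)

lemma parikh_join {m : ℕ} (f : Fin m → List (Fin n)) :
    parikh ((List.ofFn f).flatten) = ∑ j, parikh (f j) := by
  funext b
  simp [parikh, List.count_flatten, List.map_ofFn, Function.comp, List.sum_ofFn]

end PPS

theorem parikh_plus_semilinear {n : ℕ} (L : Set (List (Fin n)))
    (hL : IsSemilinear (parikh '' L)) :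
    IsSemilinear (parikh '' {w | ∃ k : ℕ, 1 ≤ k ∧ ∃ ws : Fin k → List (Fin n),
      (∀ i, ws i ∈ L) ∧ w = (List.ofFn ws).flatten}) := by
  have key : parikh '' {w | ∃ k : ℕ, 1 ≤ k ∧ ∃ ws : Fin k → List (Fin n),
      (∀ i, ws i ∈ L) ∧ w = (List.ofFn ws).flatten} = plusSet (parikh '' L) := by
    ext x
    constructor
    · rintro ⟨w, ⟨k, hk, ws, hws, rfl⟩, rfl⟩
      obtain ⟨m, rfl⟩ : ∃ m, k = m + 1 := ⟨k - 1, by omega⟩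
      exact ⟨m, fun j => parikh (ws j), fun j => ⟨ws j, hws j, rfl⟩,
        PPS.parikh_join ws⟩
    · rintro ⟨m, f, hf, rfl⟩
      choose ws hws hpar using hf
      refine ⟨(List.ofFn ws).flatten, ⟨m + 1, by omega, ws, hws, rfl⟩, ?_⟩
      rw [PPS.parikh_join]
      exact funext fun b => by simp [hpar]
  rw [key]
  exact PPS.plus_semilinear hL
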